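/- For every monoid H: (1) for each x ∈ H with x ≠ 1_H, the set {1_H, x} is a quark of the reduced finitary power monoid P_{fin,1}(H); (2) for all u ∈ H^× and x ∈ H with u ≠ x, the set {u, x} is a quark of the restricted finitary power monoid P_{fin,×}(H). -/
import Mathlib


open scoped Pointwise

/-- Two-sided divisibility in a monoid: `x` divides `y` if `y = u * x * v` for some `u, v`. -/
def DvdTS {M : Type*} [Monoid M] (x y : M) : Prop := ∃ u v : M, y = u * x * v

/-- A unit-divisor is a divisor of the identity. -/
def IsUnitDivisor {M : Type*} [Monoid M] (x : M) : Prop := DvdTS x 1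

/-- `x` is a proper divisor of `y` if `x` divides `y` but `y` does not divide `x`. -/
def IsProperDivisorTS {M : Type*} [Monoid M] (x y : M) : Prop := DvdTS x y ∧ ¬ DvdTS y x

/-- An atom is a non-unit that is not a product of two non-units. -/
def IsAtomTS {M : Type*} [Monoid M] (a : M) : Prop :=
  ¬ IsUnit a ∧ ∀ b c : M, a = b * c → IsUnit b ∨ IsUnit c

/-- A quark is a non-unit-divisor all of whose proper divisors are unit-divisors. -/
def IsQuarkTS {M : Type*} [Monoid M] (a : M) : Prop :=
  ¬ IsUnitDivisor a ∧ ∀ b : M, IsProperDivisorTS b a → IsUnitDivisor b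

/-- An irreducible is a non-unit-divisor with no factorization `a = b * c` into proper
divisors that are not unit-divisors. -/
def IsIrredTS {M : Type*} [Monoid M] (a : M) : Prop :=
  ¬ IsUnitDivisor a ∧
    ¬ ∃ b c : M, a = b * c ∧ IsProperDivisorTS b a ∧ IsProperDivisorTS c a ∧
      ¬ IsUnitDivisor b ∧ ¬ IsUnitDivisor c

def DedekindFiniteM (M : Type*) [Monoid M] : Prop := ∀ x y : M, x * y = 1 → y * x = 1

/-- ACC on principal two-sided ideals: no infinite sequence of consecutive proper divisors. -/
def ACCPrincipalTS (M : Type*) [Monoid M] : Prop :=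
  ¬ ∃ f : ℕ → M, ∀ n : ℕ, IsProperDivisorTS (f (n + 1)) (f n)

/-- Factorable: every non-unit-divisor is a (non-empty) product of irreducibles. -/
def FactorableM (M : Type*) [Monoid M] : Prop :=
  ∀ x : M, ¬ IsUnitDivisor x →
    ∃ l : List M, l ≠ [] ∧ (∀ a ∈ l, IsIrredTS a) ∧ l.prod = x

/-- Atomic: every non-unit-divisor is a (non-empty) product of atoms. -/
def AtomicM (M : Type*) [Monoid M] : Prop :=
  ∀ x : M, ¬ IsUnitDivisor x →
    ∃ l : List M, l ≠ [] ∧ (∀ a ∈ l, IsAtomTS a) ∧ l.prod = x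

/-- The finitary power monoid: non-empty finite subsets of `H` under setwise multiplication. -/
def PfinM (H : Type*) [Monoid H] : Submonoid (Set H) where
  carrier := {X : Set H | X.Finite ∧ X.Nonempty}
  mul_mem' := fun hX hY => ⟨hX.1.mul hY.1, hX.2.mul hY.2⟩
  one_mem' := ⟨Set.finite_one, 1, Set.mem_one.mpr rfl⟩

/-- The restricted finitary power monoid: non-empty finite subsets of `H` containing a unit. -/
def PfinTimes (H : Type*) [Monoid H] : Submonoid (Set H) where
  carrier := {X : Set H | X.Finite ∧ ∃ u ∈ X, IsUnit u}
  mul_mem' := by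
    rintro X Y ⟨hXf, u, hu, hu'⟩ ⟨hYf, v, hv, hv'⟩
    exact ⟨hXf.mul hYf, u * v, Set.mul_mem_mul hu hv, hu'.mul hv'⟩
  one_mem' := ⟨Set.finite_one, 1, Set.mem_one.mpr rfl, isUnit_one⟩

/-- The reduced finitary power monoid: finite subsets of `H` containing `1`. -/
def PfinOne (H : Type*) [Monoid H] : Submonoid (Set H) where
  carrier := {X : Set H | X.Finite ∧ (1 : H) ∈ X}
  mul_mem' := by
    rintro X Y ⟨hXf, hX1⟩ ⟨hYf, hY1⟩
    exact ⟨hXf.mul hYf, by simpa using Set.mul_mem_mul hX1 hY1⟩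
  one_mem' := ⟨Set.finite_one, Set.mem_one.mpr rfl⟩

lemma mem_PfinM {H : Type*} [Monoid H] {X : Set H} :
    X ∈ PfinM H ↔ X.Finite ∧ X.Nonempty := Iff.rfl

lemma mem_PfinTimes {H : Type*} [Monoid H] {X : Set H} :
    X ∈ PfinTimes H ↔ X.Finite ∧ ∃ u ∈ X, IsUnit u := Iff.rfl

lemma mem_PfinOne {H : Type*} [Monoid H] {X : Set H} :
    X ∈ PfinOne H ↔ X.Finite ∧ (1 : H) ∈ X := Iff.rfl

/-- Acyclic: `u * x * v ≠ x` whenever `u` or `v` is a non-unit. -/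
def AcyclicM (M : Type*) [Monoid M] : Prop :=
  ∀ u v x : M, (¬ IsUnit u ∨ ¬ IsUnit v) → u * x * v ≠ x

/-- Unit-cancellative: `x * y ≠ x ≠ y * x` whenever `y` is a non-unit. -/
def UnitCancellativeM (M : Type*) [Monoid M] : Prop :=
  ∀ x y : M, ¬ IsUnit y → x * y ≠ x ∧ y * x ≠ x

/-- Strongly unit-cancellative: `x * y ≠ x ≠ y * x` whenever `y ≠ 1`. -/
def StrongUnitCancellativeM (M : Type*) [Monoid M] : Prop :=
  ∀ x y : M, y ≠ 1 → x * y ≠ x ∧ y * x ≠ x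

/-- Torsion-free: the identity is the only element with finitely many powers. -/
def TorsionFreeM (M : Type*) [Monoid M] : Prop :=
  ∀ x : M, (Set.range fun k : ℕ => x ^ k).Finite → x = 1

/-- Cancellative monoid. -/
def CancellativeM (M : Type*) [Monoid M] : Prop :=
  ∀ a x y : M, (a * x = a * y → x = y) ∧ (x * a = y * a → x = y)

/-- The set of lengths of (irreducible) factorizations of `x`, with the conventions
`L(1) = {0}` and `L(u) = ∅` for a unit-divisor `u ≠ 1`. -/
def LengthSet {M : Type*} [Monoid M] (x : M) : Set ℕ :=
  {n | (x = 1 ∧ n = 0) ∨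
    (¬ IsUnitDivisor x ∧
      ∃ l : List M, l.length = n ∧ l ≠ [] ∧ (∀ a ∈ l, IsIrredTS a) ∧ l.prod = x)}

/-- The system of lengths: the family of non-empty length sets. -/
def SystemOfLengths (M : Type*) [Monoid M] : Set (Set ℕ) :=
  {L | L.Nonempty ∧ ∃ x : M, LengthSet x = L}

section QuarkHelpers

variable {H : Type*} [Monoid H]

lemma pft_singleton_mem {w : H} (hw : IsUnit w) : ({w} : Set H) ∈ PfinTimes H :=
  ⟨Set.finite_singleton w, w, Set.mem_singleton w, hw⟩

lemma pft_singleton_unitDivisor {B : PfinTimes H} {w : H} (hw : IsUnit w)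
    (hB : (B : Set H) = {w}) : IsUnitDivisor B := by
  refine ⟨⟨({(↑hw.unit⁻¹ : H)} : Set H), pft_singleton_mem hw.unit⁻¹.isUnit⟩, 1, ?_⟩
  apply Subtype.ext
  show (1 : Set H) = ({(↑hw.unit⁻¹ : H)} : Set H) * (B : Set H) * ((1 : PfinTimes H) : Set H)
  rw [hB]
  show (1 : Set H) = _ * _ * (1 : Set H)
  rw [mul_one, Set.singleton_mul_singleton, hw.val_inv_mul]
  rfl

lemma pfo_coe_subset_left (A B : PfinOne H) : (A : Set H) ⊆ ((A * B : PfinOne H) : Set H) := by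
  intro a ha
  have : a * 1 ∈ (A : Set H) * (B : Set H) := Set.mul_mem_mul ha B.2.2
  simpa using this

lemma pfo_coe_subset_right (A B : PfinOne H) : (B : Set H) ⊆ ((A * B : PfinOne H) : Set H) := by
  intro b hb
  have : (1 : H) * b ∈ (A : Set H) * (B : Set H) := Set.mul_mem_mul A.2.2 hb
  simpa using this

end QuarkHelpers

/-- `{1, x}` is a quark of `P_{fin,1}(H)` for each `x ≠ 1`, and `{u, x}` is a
quark of `P_{fin,×}(H)` for each unit `u` and each `x ≠ u`. -/
theorem two_element_sets_are_quarks (H : Type*) [Monoid H] :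
    (∀ x : H, x ≠ 1 →
      IsQuarkTS (⟨({1, x} : Set H),
        mem_PfinOne.mpr ⟨(Set.finite_singleton x).insert 1, Set.mem_insert 1 {x}⟩⟩ :
          PfinOne H)) ∧
    (∀ u x : H, ∀ hu : IsUnit u, u ≠ x →
      IsQuarkTS (⟨({u, x} : Set H),
        mem_PfinTimes.mpr ⟨(Set.finite_singleton x).insert u, u, Set.mem_insert u {x}, hu⟩⟩ :
          PfinTimes H)) := by
  constructor
  · -- Part 1: `{1, x}` is a quark of `P_{fin,1}(H)`.
    intro x hx
    set A : PfinOne H := ⟨({1, x} : Set H),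
      mem_PfinOne.mpr ⟨(Set.finite_singleton x).insert 1, Set.mem_insert 1 {x}⟩⟩ with hA
    constructor
    · -- not a unit-divisor
      rintro ⟨U, V, hUV⟩
      have hmem : x ∈ ((U * A * V : PfinOne H) : Set H) := by
        apply pfo_coe_subset_left
        apply pfo_coe_subset_right
        exact Set.mem_insert_of_mem _ rfl
      rw [← hUV] at hmem
      exact hx hmem
    · rintro B ⟨⟨U, V, hUV⟩, hnd⟩
      have hBsub : (B : Set H) ⊆ ({1, x} : Set H) := by
        intro b hb
        have : b ∈ ((U * B * V : PfinOne H) : Set H) := by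
          apply pfo_coe_subset_left
          exact pfo_coe_subset_right U B hb
        rwa [← hUV] at this
      by_cases hxB : x ∈ (B : Set H)
      · exfalso
        apply hnd
        have hBA : B = A := by
          apply Subtype.ext
          apply Set.Subset.antisymm hBsub
          intro c hc
          rcases hc with rfl | hc
          · exact B.2.2
          · rwa [Set.mem_singleton_iff.mp hc]
        exact ⟨1, 1, by rw [hBA, one_mul, mul_one]⟩
      · have hB1 : B = 1 := by
          apply Subtype.ext
          apply Set.Subset.antisymm
          · intro c hc
            rcases hBsub hc with rfl | hc'
            · rfl
            · exact absurd (Set.mem_singleton_iff.mp hc' ▸ hc) hxB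
          · intro c hc
            rcases hc with rfl
            exact B.2.2
        exact ⟨1, 1, by rw [hB1, one_mul, mul_one]⟩
  · -- Part 2: `{u, x}` is a quark of `P_{fin,×}(H)`.
    intro u x hu hux
    set A : PfinTimes H := ⟨({u, x} : Set H),
      mem_PfinTimes.mpr ⟨(Set.finite_singleton x).insert u, u, Set.mem_insert u {x}, hu⟩⟩ with hA
    have coeA : (A : Set H) = ({u, x} : Set H) := rfl
    constructor
    · rintro ⟨U, V, hUV⟩
      obtain ⟨u0, hu0U, hu0⟩ := U.2.2
      obtain ⟨v0, hv0V, hv0⟩ := V.2.2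
      have key : ∀ a ∈ ({u, x} : Set H), u0 * a * v0 = 1 := by
        intro a ha
        have : u0 * a * v0 ∈ ((U * A * V : PfinTimes H) : Set H) :=
          Set.mul_mem_mul (Set.mul_mem_mul hu0U ha) hv0V
        rw [← hUV] at this
        exact this
      have h1 : u0 * u * v0 = 1 := key u (Set.mem_insert u {x})
      have h2 : u0 * x * v0 = 1 := key x (Set.mem_insert_of_mem _ rfl)
      have : u0 * u * v0 = u0 * x * v0 := h1.trans h2.symm
      have : u0 * u = u0 * x := hv0.mul_right_cancel this
      exact hux (hu0.mul_left_cancel this)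
    · rintro B ⟨⟨U, V, hUV⟩, hnd⟩
      obtain ⟨u0, hu0U, hu0⟩ := U.2.2
      obtain ⟨v0, hv0V, hv0⟩ := V.2.2
      have key : ∀ b ∈ (B : Set H), u0 * b * v0 ∈ ({u, x} : Set H) := by
        intro b hb
        have : u0 * b * v0 ∈ ((U * B * V : PfinTimes H) : Set H) :=
          Set.mul_mem_mul (Set.mul_mem_mul hu0U hb) hv0V
        rw [← hUV] at this
        exact this
      -- inverses
      set u0i : H := (↑hu0.unit⁻¹ : H) with hu0i
      set v0i : H := (↑hv0.unit⁻¹ : H) with hv0i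
      have hiu : u0i * u0 = 1 := hu0.unit.inv_mul
      have hui : u0 * u0i = 1 := hu0.unit.mul_inv
      have hiv : v0i * v0 = 1 := hv0.unit.inv_mul
      have hvi : v0 * v0i = 1 := hv0.unit.mul_inv
      have solve : ∀ b c : H, u0 * b * v0 = c → b = u0i * c * v0i := by
        intro b c h
        have h' : u0i * (u0 * b * v0) * v0i = u0i * c * v0i := by rw [h]
        have e : u0i * (u0 * b * v0) * v0i = b := by
          rw [mul_assoc u0 b v0, ← mul_assoc u0i u0 (b * v0), hiu, one_mul,
            mul_assoc b v0 v0i, hvi, mul_one]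
        exact e.symm.trans h'
      by_cases hhit : (∃ b ∈ (B : Set H), u0 * b * v0 = u) ∧ (∃ b ∈ (B : Set H), u0 * b * v0 = x)
      · -- B = u0i * A * v0i, so A divides B: contradiction with properness
        exfalso
        apply hnd
        obtain ⟨⟨b1, hb1, hb1e⟩, ⟨b2, hb2, hb2e⟩⟩ := hhit
        have hBeq : (B : Set H) = {u0i * u * v0i, u0i * x * v0i} := by
          apply Set.Subset.antisymm
          · intro c hc
            rcases key c hc with h | h
            · exact Or.inl (solve c u h)
            · exact Or.inr
                (Set.mem_singleton_iff.mpr (solve c x (Set.mem_singleton_iff.mp h)))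
          · intro c hc
            rcases hc with rfl | hc
            · rwa [← solve b1 u hb1e]
            · rw [Set.mem_singleton_iff.mp hc, ← solve b2 x hb2e]; exact hb2
        refine ⟨⟨({u0i} : Set H), pft_singleton_mem hu0.unit⁻¹.isUnit⟩,
          ⟨({v0i} : Set H), pft_singleton_mem hv0.unit⁻¹.isUnit⟩, ?_⟩
        apply Subtype.ext
        show (B : Set H) = ({u0i} : Set H) * (A : Set H) * ({v0i} : Set H)
        rw [coeA, hBeq, Set.singleton_mul, Set.image_pair, Set.mul_singleton,
          Set.image_pair]
      · -- B is a singleton containing a unit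
        rw [not_and_or] at hhit
        obtain ⟨w, hwB, hw⟩ := B.2.2
        have hBsing : (B : Set H) = {w} := by
          rcases hhit with h | h
          · push_neg at h
            have hall : ∀ b ∈ (B : Set H), b = u0i * x * v0i := by
              intro b hb
              rcases key b hb with he | he
              · exact absurd he (h b hb)
              · exact solve b x (Set.mem_singleton_iff.mp he)
            apply Set.Subset.antisymm
            · intro c hc
              rw [hall c hc, ← hall w hwB]
              rfl
            · intro c hc
              rwa [Set.mem_singleton_iff.mp hc]
          · push_neg at h
            have hall : ∀ b ∈ (B : Set H), b = u0i * u * v0i := by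
              intro b hb
              rcases key b hb with he | he
              · exact solve b u he
              · exact absurd (Set.mem_singleton_iff.mp he) (h b hb)
            apply Set.Subset.antisymm
            · intro c hc
              rw [hall c hc, ← hall w hwB]
              rfl
            · intro c hc
              rwa [Set.mem_singleton_iff.mp hc]
        exact pft_singleton_unitDivisor hw hBsing
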